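/- For every deterministic online paging algorithm A with cache size k and every h ≤ k, and for every constant α < k/(k−h+1), there exist arbitrarily long page request sequences z over a universe of k+1 pages such that the number of page faults of A with cache size k on z exceeds α times the number of page faults of the optimal offline algorithm with cache size h on z. -/

import Mathlib

/-- A (demand-)paging schedule for cache size `h` serving the request
sequence `z`: `cache i` is the cache contents just before serving the `i`-th
request.  The cache starts empty, never holds more than `h` pages, the
requested page is in the cache after serving it, and pages enter the cache
only when requested. -/
structure PagingSchedule (h : ℕ) (z : List ℕ) where
  cache : ℕ → Finset ℕ
  init : cache 0 = ∅
  card_le : ∀ i, (cache i).card ≤ h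
  serves : ∀ i, i < z.length → z.getD i 0 ∈ cache (i + 1)
  moves : ∀ i, i < z.length → cache (i + 1) ⊆ cache i ∪ {z.getD i 0}

/-- The number of page faults incurred by a paging schedule on `z`. -/
def schedFaults {h : ℕ} {z : List ℕ} (S : PagingSchedule h z) : ℕ :=
  ((List.range z.length).filter
    fun i => decide (z.getD i 0 ∉ S.cache i)).length

/-- The minimum number of page faults needed to serve `z` with a cache of
size `h` (the performance of the optimal offline algorithm). -/
noncomputable def optFaults (h : ℕ) (z : List ℕ) : ℕ :=
  sInf {n | ∃ S : PagingSchedule h z, schedFaults S = n}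

/-- A deterministic online (demand-)paging algorithm with cache size `k`:
the cache contents are a function of the request history seen so far. -/
structure OnlineAlg (k : ℕ) where
  cache : List ℕ → Finset ℕ
  init : cache [] = ∅
  card_le : ∀ pre, (cache pre).card ≤ k
  serves : ∀ pre x, x ∈ cache (pre ++ [x])
  moves : ∀ pre x, cache (pre ++ [x]) ⊆ cache pre ∪ {x}

/-- The number of page faults incurred by the online algorithm `A` on `z`. -/
def onlineFaults {k : ℕ} (A : OnlineAlg k) (z : List ℕ) : ℕ :=
  ((List.range z.length).filter
    fun i => decide (z.getD i 0 ∉ A.cache (z.take i))).length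

open Finset

lemma length_filter_eq_card (N : ℕ) (P : ℕ → Prop) [DecidablePred P] :
    ((List.range N).filter (fun i => decide (P i))).length
      = ((Finset.range N).filter P).card := rfl

noncomputable def nxtOcc (f : ℕ → ℕ) (s : ℕ) : ℕ := sInf {t | s < t ∧ f t = f s}

def Src (f : ℕ → ℕ) (N : ℕ) (s : ℕ) : Prop := s < N ∧ ∃ t, s < t ∧ t < N ∧ f t = f s

lemma Src.nonempty {f : ℕ → ℕ} {N s : ℕ} (h : Src f N s) :
    {t | s < t ∧ f t = f s}.Nonempty := by
  obtain ⟨-, t, h1, h2, h3⟩ := h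
  exact ⟨t, h1, h3⟩

lemma nxtOcc_spec {f : ℕ → ℕ} {N s : ℕ} (h : Src f N s) :
    s < nxtOcc f s ∧ f (nxtOcc f s) = f s := Nat.sInf_mem h.nonempty

lemma nxtOcc_min {f : ℕ → ℕ} (s : ℕ) {t : ℕ} (h1 : s < t) (h2 : f t = f s) :
    nxtOcc f s ≤ t := Nat.sInf_le ⟨h1, h2⟩

lemma nxtOcc_lt {f : ℕ → ℕ} {N s : ℕ} (h : Src f N s) : nxtOcc f s < N := by
  obtain ⟨-, t, h1, h2, h3⟩ := h
  exact lt_of_le_of_lt (nxtOcc_min s h1 h3) h2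

lemma nxtOcc_two_le {f : ℕ → ℕ} {N s : ℕ} (hf2 : ∀ i, f (i+1) ≠ f i) (h : Src f N s) :
    s + 2 ≤ nxtOcc f s := by
  have h1 := (nxtOcc_spec h).1
  have h2 := (nxtOcc_spec h).2
  rcases Nat.lt_or_ge (nxtOcc f s) (s+2) with hlt | hge
  · have : nxtOcc f s = s + 1 := by omega
    rw [this] at h2
    exact absurd h2 (hf2 s)
  · exact hge

noncomputable def col (f : ℕ → ℕ) (N : ℕ) (s : ℕ) : ℕ :=
  sInf {c | ∀ s', s' < s → Src f N s' → s + 2 ≤ nxtOcc f s' → col f N s' ≠ c}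
termination_by s
decreasing_by assumption

section Act
variable {k N : ℕ} {f : ℕ → ℕ}

lemma act_card (hf1 : ∀ i, f i ≤ k) (i : ℕ) [DecidablePred (Src f N)] :
    ((Finset.range N).filter
      (fun s => Src f N s ∧ s + 2 ≤ i ∧ i ≤ nxtOcc f s)).card ≤ k := by
  classical
  have hmem : f (i-1) ∈ Finset.range (k+1) := mem_range.mpr (Nat.lt_succ_of_le (hf1 _))
  have := Finset.card_le_card_of_injOn
    (s := (Finset.range N).filter (fun s => Src f N s ∧ s + 2 ≤ i ∧ i ≤ nxtOcc f s))
    (t := (Finset.range (k+1)).erase (f (i-1))) f ?_ ?_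
  · rw [Finset.card_erase_of_mem hmem, Finset.card_range] at this
    simpa using this
  · intro s hs
    rw [mem_coe, mem_filter] at hs
    obtain ⟨hsN, hsrc, h2, h3⟩ := hs
    refine Finset.mem_erase.mpr ⟨?_, mem_range.mpr (Nat.lt_succ_of_le (hf1 _))⟩
    intro heq
    have : nxtOcc f s ≤ i - 1 := nxtOcc_min s (by omega) heq.symm
    omega
  · intro s1 h1 s2 h2 hfeq
    simp only [coe_filter, Set.mem_setOf_eq, mem_range] at h1 h2
    by_contra hne
    rcases Nat.lt_or_ge s1 s2 with hlt | hge
    · have : nxtOcc f s1 ≤ s2 := nxtOcc_min s1 hlt hfeq.symm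
      omega
    · have hlt : s2 < s1 := by omega
      have : nxtOcc f s2 ≤ s1 := nxtOcc_min s2 hlt hfeq
      omega

lemma col_key (hf1 : ∀ i, f i ≤ k) (hf2 : ∀ i, f (i+1) ≠ f i)
    {s : ℕ} (hs : Src f N s) :
    col f N s < k ∧
      ∀ s', s' < s → Src f N s' → s + 2 ≤ nxtOcc f s' → col f N s' ≠ col f N s := by
  classical
  set O : Finset ℕ := (Finset.range s).filter
      (fun s' => Src f N s' ∧ s + 2 ≤ nxtOcc f s') with hO
  have hsub : insert s O ⊆ (Finset.range N).filter
      (fun s' => Src f N s' ∧ s' + 2 ≤ s + 2 ∧ s + 2 ≤ nxtOcc f s') := by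
    intro x hx
    rcases Finset.mem_insert.mp hx with rfl | hx
    · exact mem_filter.mpr ⟨mem_range.mpr hs.1, hs, by omega, nxtOcc_two_le hf2 hs⟩
    · rw [hO, mem_filter, mem_range] at hx
      exact mem_filter.mpr ⟨mem_range.mpr hx.2.1.1, hx.2.1, by omega, hx.2.2⟩
  have hOcard : O.card + 1 ≤ k := by
    have h1 : (insert s O).card ≤ k := le_trans (Finset.card_le_card hsub) (act_card hf1 (s+2))
    rw [Finset.card_insert_of_notMem (by simp [hO])] at h1
    omega
  have himg : (O.image (col f N)).card < k :=
    lt_of_le_of_lt (Finset.card_image_le) (by omega)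
  obtain ⟨c0, hc0r, hc0n⟩ : ∃ c0 ∈ Finset.range k, c0 ∉ O.image (col f N) := by
    by_contra hcon
    push_neg at hcon
    have := Finset.card_le_card (fun x hx => hcon x hx)
    rw [Finset.card_range] at this
    omega
  have hc0 : c0 ∈ {c | ∀ s', s' < s → Src f N s' → s + 2 ≤ nxtOcc f s' → col f N s' ≠ c} := by
    intro s' hlt hsrc hov heq
    have hs'O : s' ∈ O := by
      rw [hO]
      exact mem_filter.mpr ⟨mem_range.mpr hlt, hsrc, hov⟩
    rw [← heq] at hc0n
    exact hc0n (Finset.mem_image_of_mem _ hs'O)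
  have hmem := Nat.sInf_mem (s := {c | ∀ s', s' < s → Src f N s' →
      s + 2 ≤ nxtOcc f s' → col f N s' ≠ c}) ⟨c0, hc0⟩
  have hcol_eq : col f N s = sInf {c | ∀ s', s' < s → Src f N s' →
      s + 2 ≤ nxtOcc f s' → col f N s' ≠ c} := by rw [col]
  constructor
  · have hle : col f N s ≤ c0 := by
      rw [hcol_eq]; exact Nat.sInf_le hc0
    exact lt_of_le_of_lt hle (mem_range.mp hc0r)
  · intro s' h1 h2 h3
    rw [hcol_eq]
    exact hmem s' h1 h2 h3

end Act

lemma pick_classes (ν : ℕ → ℕ) :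
    ∀ (m : ℕ) (s : Finset ℕ), m ≤ s.card →
      ∃ S ⊆ s, S.card = m ∧ m * (∑ c ∈ s, ν c) ≤ s.card * (∑ c ∈ S, ν c) := by
  intro m
  induction m with
  | zero => intro s _; exact ⟨∅, empty_subset _, card_empty, by simp⟩
  | succ m ih =>
    intro s hm
    have hne : s.Nonempty := card_pos.mp (by omega)
    obtain ⟨c0, hc0, hmax⟩ := s.exists_max_image ν hne
    have hcard_erase : (s.erase c0).card = s.card - 1 := card_erase_of_mem hc0
    obtain ⟨S', hS'sub, hS'card, hS'ineq⟩ := ih (s.erase c0) (by omega)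
    have hc0S' : c0 ∉ S' := fun h => (notMem_erase c0 s) (hS'sub h)
    refine ⟨insert c0 S', ?_, ?_, ?_⟩
    · intro x hx
      rcases mem_insert.mp hx with rfl | hx
      · exact hc0
      · exact erase_subset _ _ (hS'sub hx)
    · rw [card_insert_of_notMem hc0S', hS'card]
    · rw [sum_insert hc0S']
      have hsum_split : ∑ c ∈ s, ν c = ν c0 + ∑ c ∈ s.erase c0, ν c :=
        (Finset.add_sum_erase s ν hc0).symm
      have hsd : ∑ c ∈ (s.erase c0) \ S', ν c + ∑ c ∈ S', ν c = ∑ c ∈ s.erase c0, ν c :=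
        Finset.sum_sdiff hS'sub
      have hsdcard : ((s.erase c0) \ S').card = (s.erase c0).card - m := by
        rw [card_sdiff_of_subset hS'sub, hS'card]
      have hsdle : ∑ c ∈ (s.erase c0) \ S', ν c ≤ ((s.erase c0).card - m) * ν c0 := by
        rw [← hsdcard]
        calc ∑ c ∈ (s.erase c0) \ S', ν c
            ≤ ∑ _c ∈ (s.erase c0) \ S', ν c0 := by
              refine Finset.sum_le_sum ?_
              intro x hx
              exact hmax x (erase_subset _ _ (mem_sdiff.mp hx).1)
          _ = ((s.erase c0) \ S').card * ν c0 := by rw [sum_const, smul_eq_mul]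
      set a := ν c0
      set e := ∑ c ∈ s.erase c0, ν c
      set p := ∑ c ∈ S', ν c
      have hn : s.card = (s.erase c0).card + 1 := by
        have : 1 ≤ s.card := by omega
        omega
      set n' := (s.erase c0).card
      obtain ⟨d, hd⟩ : ∃ d, n' = m + d := ⟨n' - m, by omega⟩
      have f1 : m * e ≤ n' * p := hS'ineq
      have f2 : e ≤ p + d * a := by
        have he : e = ∑ c ∈ (s.erase c0) \ S', ν c + p := hsd.symm
        rw [he]
        have hdm : n' - m = d := by omega
        rw [hdm] at hsdle
        omega
      rw [hsum_split, hn, hd]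
      nlinarith [f1, f2, Nat.zero_le a, Nat.zero_le p, Nat.zero_le e]

lemma offline_bound (k h N : ℕ) (hh : 1 ≤ h) (hhk : h ≤ k) (f : ℕ → ℕ)
    (hf1 : ∀ i, f i ≤ k) (hf2 : ∀ i, f (i+1) ≠ f i)
    (z : List ℕ) (hlen : z.length = N) (hz : ∀ i, i < N → z.getD i 0 = f i) :
    k * optFaults h z + (h-1) * N ≤ k * N + (h-1) * (k+1) := by
  classical
  have hk : 1 ≤ k := hh.trans hhk
  set T : Finset ℕ := (Finset.range N).filter (Src f N) with hT
  have hTcard : N ≤ T.card + (k+1) := by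
    set C : Finset ℕ := (Finset.range N).filter (fun s => ¬ Src f N s) with hC
    have hCcard : C.card ≤ k + 1 := by
      have := Finset.card_le_card_of_injOn (s := C) (t := Finset.range (k+1)) f ?_ ?_
      · simpa using this
      · intro s hs
        exact mem_range.mpr (Nat.lt_succ_of_le (hf1 s))
      · intro s1 h1 s2 h2 hfeq
        simp only [hC, coe_filter, Set.mem_setOf_eq, mem_range] at h1 h2
        by_contra hne
        rcases Nat.lt_or_ge s1 s2 with hlt | hge
        · exact h1.2 ⟨h1.1, s2, hlt, h2.1, hfeq.symm⟩
        · have hlt : s2 < s1 := by omega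
          exact h2.2 ⟨h2.1, s1, hlt, h1.1, hfeq⟩
    have hpart : T.card + C.card = N := by
      rw [hT, hC, Finset.card_filter_add_card_filter_not, Finset.card_range]
    omega
  have colk : ∀ s ∈ T, col f N s ∈ Finset.range k := by
    intro s hs
    exact mem_range.mpr (col_key hf1 hf2 (mem_filter.mp hs).2).1
  have hfiber : T.card = ∑ c ∈ Finset.range k, (T.filter (fun s => col f N s = c)).card :=
    Finset.card_eq_sum_card_fiberwise colk
  obtain ⟨Scol, hSsub, hScard, hSineq⟩ :=
    pick_classes (fun c => (T.filter (fun s => col f N s = c)).card) (h-1)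
      (Finset.range k) (by rw [card_range]; omega)
  set Hs : Finset ℕ := T.filter (fun s => col f N s ∈ Scol) with hHs
  have hHsT : Hs ⊆ T := filter_subset _ _
  have hHsSrc : ∀ s ∈ Hs, Src f N s := fun s hs => (mem_filter.mp (hHsT hs)).2
  have hHcardsum : Hs.card = ∑ c ∈ Scol, (T.filter (fun s => col f N s = c)).card := by
    rw [Finset.card_eq_sum_card_fiberwise
      (f := col f N) (s := Hs) (t := Scol) (fun s hs => (mem_filter.mp hs).2)]
    refine Finset.sum_congr rfl ?_
    intro c hc
    congr 1
    ext s
    simp only [hHs, mem_filter]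
    constructor
    · rintro ⟨⟨hsT, -⟩, hceq⟩
      exact ⟨hsT, hceq⟩
    · rintro ⟨hsT, hceq⟩
      exact ⟨⟨hsT, hceq ▸ hc⟩, hceq⟩
  have hkey : (h-1) * T.card ≤ k * Hs.card := by
    rw [card_range] at hSineq
    rw [hfiber, hHcardsum]
    exact hSineq
  -- bound on simultaneously strictly active chosen intervals
  have hstrict : ∀ i : ℕ, ((Hs.filter (fun s => s + 2 ≤ i ∧ i ≤ nxtOcc f s)).card ≤ h - 1) := by
    intro i
    have := Finset.card_le_card_of_injOn
      (s := Hs.filter (fun s => s + 2 ≤ i ∧ i ≤ nxtOcc f s)) (t := Scol) (col f N) ?_ ?_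
    · rw [hScard] at this; exact this
    · intro s hsmem
      have : s ∈ Hs := (mem_filter.mp hsmem).1
      exact (mem_filter.mp this).2
    · intro s1 h1 s2 h2 hceq
      simp only [coe_filter, Set.mem_setOf_eq] at h1 h2
      by_contra hne
      rcases Nat.lt_or_ge s1 s2 with hlt | hge
      · exact (col_key hf1 hf2 (hHsSrc s2 h2.1)).2 s1 hlt (hHsSrc s1 h1.1)
          (by omega) hceq
      · have hlt : s2 < s1 := by omega
        exact (col_key hf1 hf2 (hHsSrc s1 h1.1)).2 s2 hlt (hHsSrc s2 h2.1)
          (by omega) hceq.symm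
  set cache : ℕ → Finset ℕ := fun i => if i = 0 then ∅ else
      insert (f (i-1)) ((Hs.filter (fun s => s < i ∧ i ≤ nxtOcc f s)).image f) with hcache
  have hcache_sub : ∀ i, i ≠ 0 → cache i ⊆
      insert (f (i-1)) ((Hs.filter (fun s => s + 2 ≤ i ∧ i ≤ nxtOcc f s)).image f) := by
    intro i hi x hx
    simp only [hcache, if_neg hi] at hx
    rcases mem_insert.mp hx with rfl | hx
    · exact mem_insert_self _ _
    obtain ⟨s, hsmem, rfl⟩ := mem_image.mp hx
    obtain ⟨hsHs, hslt, hsle⟩ := mem_filter.mp hsmem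
    rcases Nat.lt_or_ge i (s+2) with hlt | hge
    · have hse : s = i - 1 := by omega
      rw [hse]
      exact mem_insert_self _ _
    · exact mem_insert_of_mem (mem_image_of_mem f (mem_filter.mpr ⟨hsHs, hge, hsle⟩))
  obtain ⟨S, hSc⟩ : ∃ S : PagingSchedule h z, S.cache = cache := by
    refine ⟨⟨cache, ?_, ?_, ?_, ?_⟩, rfl⟩
    · simp [hcache]
    · intro i
      by_cases hi : i = 0
      · simp [hcache, hi]
      · refine le_trans (Finset.card_le_card (hcache_sub i hi)) ?_
        refine le_trans (Finset.card_insert_le _ _) ?_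
        have h1 := Finset.card_image_le
          (s := Hs.filter (fun s => s + 2 ≤ i ∧ i ≤ nxtOcc f s)) (f := f)
        have h2 := hstrict i
        omega
    · intro i hilen
      rw [hlen] at hilen
      rw [hz i hilen]
      simp only [hcache, if_neg (Nat.succ_ne_zero i), Nat.add_sub_cancel]
      exact mem_insert_self _ _
    · intro i hilen x hx
      rw [hlen] at hilen
      rw [hz i hilen]
      simp only [hcache, if_neg (Nat.succ_ne_zero i), Nat.add_sub_cancel] at hx
      rcases mem_insert.mp hx with rfl | hx
      · exact mem_union_right _ (mem_singleton_self _)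
      obtain ⟨s, hsmem, rfl⟩ := mem_image.mp hx
      obtain ⟨hsHs, hslt, hsle⟩ := mem_filter.mp hsmem
      rcases Nat.lt_or_ge s i with hlt | hge
      · apply mem_union_left
        simp only [hcache, if_neg (by omega : ¬ (i = 0))]
        exact mem_insert_of_mem (mem_image_of_mem f (mem_filter.mpr ⟨hsHs, hlt, by omega⟩))
      · have hse : s = i := by omega
        rw [hse]
        exact mem_union_right _ (mem_singleton_self _)
  have hfault : schedFaults S ≤ N - Hs.card := by
    unfold schedFaults
    rw [hlen, hSc, length_filter_eq_card]
    have hsubset : (Finset.range N).filter (fun i => z.getD i 0 ∉ cache i) ⊆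
        (Finset.range N) \ (Hs.image (nxtOcc f)) := by
      intro i hi
      rw [mem_filter] at hi
      refine mem_sdiff.mpr ⟨hi.1, ?_⟩
      intro hmem
      obtain ⟨s, hsHs, hseq⟩ := mem_image.mp hmem
      have hsrc : Src f N s := hHsSrc s hsHs
      apply hi.2
      have hiN : i < N := mem_range.mp hi.1
      rw [hz i hiN]
      have h1 : s < i := by
        have := (nxtOcc_spec hsrc).1
        omega
      have hieq : f i = f s := by
        rw [← hseq]
        exact (nxtOcc_spec hsrc).2
      rw [hieq]
      simp only [hcache, if_neg (by omega : ¬ (i = 0))]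
      exact mem_insert_of_mem (mem_image_of_mem f
        (mem_filter.mpr ⟨hsHs, h1, le_of_eq hseq.symm⟩))
    have himgsub : Hs.image (nxtOcc f) ⊆ Finset.range N := by
      intro t ht
      obtain ⟨s, hsHs, rfl⟩ := mem_image.mp ht
      exact mem_range.mpr (nxtOcc_lt (hHsSrc s hsHs))
    have hinj : (Hs.image (nxtOcc f)).card = Hs.card := by
      apply Finset.card_image_of_injOn
      intro s1 h1 s2 h2 heq
      by_contra hne
      have hsrc1 : Src f N s1 := hHsSrc s1 h1
      have hsrc2 : Src f N s2 := hHsSrc s2 h2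
      rcases Nat.lt_or_ge s1 s2 with hlt | hge
      · have hfeq : f s2 = f s1 := by
          have e1 := (nxtOcc_spec hsrc1).2
          have e2 := (nxtOcc_spec hsrc2).2
          rw [← e1, ← e2, heq]
        have := nxtOcc_min s1 hlt hfeq
        have := (nxtOcc_spec hsrc2).1
        omega
      · have hlt : s2 < s1 := by omega
        have hfeq : f s1 = f s2 := by
          have e1 := (nxtOcc_spec hsrc1).2
          have e2 := (nxtOcc_spec hsrc2).2
          rw [← e1, ← e2, heq]
        have := nxtOcc_min s2 hlt hfeq
        have := (nxtOcc_spec hsrc1).1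
        omega
    calc ((Finset.range N).filter (fun i => z.getD i 0 ∉ cache i)).card
        ≤ ((Finset.range N) \ (Hs.image (nxtOcc f))).card := Finset.card_le_card hsubset
      _ = N - Hs.card := by
          rw [Finset.card_sdiff_of_subset himgsub, Finset.card_range, hinj]
  have hopt : optFaults h z ≤ N - Hs.card := le_trans (Nat.sInf_le ⟨S, rfl⟩) hfault
  have hHsN : Hs.card ≤ N := by
    have : Hs ⊆ Finset.range N := fun s hs => (mem_filter.mp (hHsT hs)).1
    have := Finset.card_le_card this
    simpa using this
  have e0 : optFaults h z + Hs.card ≤ N := by omega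
  have e1 : k * optFaults h z + k * Hs.card ≤ k * N := by
    have := Nat.mul_le_mul_left k e0
    rw [Nat.mul_add] at this
    exact this
  have e2 : (h-1) * N ≤ (h-1) * T.card + (h-1)*(k+1) := by
    calc (h-1)*N ≤ (h-1) * (T.card + (k+1)) := Nat.mul_le_mul_left _ hTcard
      _ = (h-1) * T.card + (h-1)*(k+1) := by ring
  linarith [e1, e2, hkey]

noncomputable def nextReq {k : ℕ} (A : OnlineAlg k) (l : List ℕ) : ℕ :=
  sInf {p | p ∉ A.cache l}

lemma nextReq_exists {k : ℕ} (A : OnlineAlg k) (l : List ℕ) :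
    ∃ p, p ≤ k ∧ p ∉ A.cache l := by
  by_contra hcon
  push_neg at hcon
  have hsub : Finset.range (k+1) ⊆ A.cache l := by
    intro p hp
    exact hcon p (Nat.lt_succ_iff.mp (Finset.mem_range.mp hp))
  have := Finset.card_le_card hsub
  simp [Finset.card_range] at this
  have := A.card_le l
  omega

lemma nextReq_not_mem {k : ℕ} (A : OnlineAlg k) (l : List ℕ) :
    nextReq A l ∉ A.cache l := by
  obtain ⟨p, _, hp⟩ := nextReq_exists A l
  exact Nat.sInf_mem (s := {p | p ∉ A.cache l}) ⟨p, hp⟩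

lemma nextReq_le {k : ℕ} (A : OnlineAlg k) (l : List ℕ) :
    nextReq A l ≤ k := by
  obtain ⟨p, hpk, hp⟩ := nextReq_exists A l
  exact le_trans (Nat.sInf_le hp) hpk

noncomputable def advSeq {k : ℕ} (A : OnlineAlg k) : ℕ → List ℕ
  | 0 => []
  | n+1 => advSeq A n ++ [nextReq A (advSeq A n)]

lemma advSeq_length {k : ℕ} (A : OnlineAlg k) (n : ℕ) : (advSeq A n).length = n := by
  induction n with
  | zero => rfl
  | succ n ih => simp [advSeq, ih]

lemma advSeq_take {k : ℕ} (A : OnlineAlg k) {i n : ℕ} (h : i ≤ n) :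
    (advSeq A n).take i = advSeq A i := by
  induction n with
  | zero => simp at h; simp [h, advSeq]
  | succ n ih =>
    rcases Nat.lt_or_ge i (n+1) with hlt | hge
    · have hi : i ≤ n := Nat.lt_succ_iff.mp hlt
      rw [advSeq, List.take_append_of_le_length (by rw [advSeq_length]; exact hi)]
      exact ih hi
    · have : i = n + 1 := le_antisymm h hge
      subst this
      exact List.take_of_length_le (by rw [advSeq_length])

lemma advSeq_getD {k : ℕ} (A : OnlineAlg k) {i n : ℕ} (h : i < n) :
    (advSeq A n).getD i 0 = nextReq A (advSeq A i) := by
  induction n with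
  | zero => omega
  | succ n ih =>
    rcases Nat.lt_or_ge i n with hlt | hge
    · rw [advSeq, List.getD_append _ _ _ _ (by rw [advSeq_length]; exact hlt)]
      exact ih hlt
    · have : i = n := by omega
      subst this
      rw [advSeq]
      rw [List.getD_eq_getElem?_getD, List.getElem?_append_right (by rw [advSeq_length])]
      simp [advSeq_length]

lemma advSeq_mem {k : ℕ} (A : OnlineAlg k) {x n : ℕ} (h : x ∈ advSeq A n) : x ≤ k := by
  induction n with
  | zero => simp [advSeq] at h
  | succ n ih =>
    rw [advSeq, List.mem_append] at h
    rcases h with h | h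
    · exact ih h
    · simp at h; subst h; exact nextReq_le A _


/-- Lower bound matching the LRU resource augmentation guarantee: for every
deterministic online algorithm `A` with cache size `k`, every `h ≤ k`, and
every constant `α < k / (k - h + 1)`, there are arbitrarily long request
sequences over a universe of `k + 1` pages on which `A` faults more than
`α` times as often as the optimal offline algorithm with cache size `h`. -/
theorem online_lower_bound (k h : ℕ) (hh : 1 ≤ h) (hhk : h ≤ k)
    (α : ℝ) (hα : α < (k : ℝ) / ((k : ℝ) - (h : ℝ) + 1))
    (A : OnlineAlg k) (m : ℕ) :
    ∃ z : List ℕ, m ≤ z.length ∧ (∀ x ∈ z, x ≤ k) ∧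
      α * (optFaults h z : ℝ) < (onlineFaults A z : ℝ) := by
  classical
  have hk : 1 ≤ k := hh.trans hhk
  set f : ℕ → ℕ := fun i => nextReq A (advSeq A i) with hf
  have hf1 : ∀ i, f i ≤ k := fun i => nextReq_le A _
  have hf2 : ∀ i, f (i+1) ≠ f i := by
    intro i heq
    have hnm : f (i+1) ∉ A.cache (advSeq A i ++ [f i]) := nextReq_not_mem A (advSeq A (i+1))
    rw [heq] at hnm
    exact hnm (A.serves (advSeq A i) (f i))
  have hKH : (0:ℝ) < (k:ℝ) - (h:ℝ) + 1 := by
    have : (h:ℝ) ≤ (k:ℝ) := Nat.cast_le.mpr hhk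
    linarith
  have hδ : 0 < (k:ℝ) - α * ((k:ℝ) - (h:ℝ) + 1) := by
    have := (lt_div_iff₀ hKH).mp hα
    linarith
  set B : ℝ := (α * (((h:ℝ)-1) * ((k:ℝ)+1))) / ((k:ℝ) - α * ((k:ℝ) - (h:ℝ) + 1)) with hB
  obtain ⟨N, hN⟩ := exists_nat_gt (max B (max (m:ℝ) 1))
  have hNm : m ≤ N := by
    have h1 : (m:ℝ) < N :=
      lt_of_le_of_lt (le_trans (le_max_left _ _) (le_max_right _ _)) hN
    exact_mod_cast h1.le
  have hN1 : (1:ℝ) ≤ (N:ℝ) := by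
    have h1 : (1:ℝ) < N :=
      lt_of_le_of_lt (le_trans (le_max_right _ _) (le_max_right _ _)) hN
    linarith
  have hNB : B < (N:ℝ) := lt_of_le_of_lt (le_max_left _ _) hN
  have hA2 : α * (((h:ℝ)-1) * ((k:ℝ)+1)) < (N:ℝ) * ((k:ℝ) - α * ((k:ℝ)-(h:ℝ)+1)) := by
    rw [hB, div_lt_iff₀ hδ] at hNB
    linarith
  refine ⟨advSeq A N, ?_, ?_, ?_⟩
  · rw [advSeq_length]; exact hNm
  · intro x hx; exact advSeq_mem A hx
  · have honline : onlineFaults A (advSeq A N) = N := by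
      unfold onlineFaults
      rw [advSeq_length]
      rw [List.filter_eq_self.mpr, List.length_range]
      intro a ha
      rw [List.mem_range] at ha
      simp only [decide_eq_true_eq]
      rw [advSeq_take A (le_of_lt ha), advSeq_getD A ha]
      exact nextReq_not_mem A _
    have hoff := offline_bound k h N hh hhk f hf1 hf2 (advSeq A N)
      (advSeq_length A N) (fun i hi => advSeq_getD A hi)
    rw [honline]
    have hcast : (k:ℝ) * ((optFaults h (advSeq A N) : ℕ):ℝ) + ((h:ℝ)-1) * (N:ℝ)
        ≤ (k:ℝ) * (N:ℝ) + ((h:ℝ)-1) * ((k:ℝ)+1) := by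
      have h2 := (Nat.cast_le (α := ℝ)).mpr hoff
      push_cast [Nat.cast_sub hh] at h2
      linarith
    rcases le_or_gt α 0 with hneg | hpos
    · have hF0 : (0:ℝ) ≤ ((optFaults h (advSeq A N) : ℕ):ℝ) := Nat.cast_nonneg _
      have : α * ((optFaults h (advSeq A N) : ℕ):ℝ) ≤ 0 := by
        have := mul_le_mul_of_nonneg_right hneg hF0
        simpa using this
      linarith
    · set F : ℝ := ((optFaults h (advSeq A N) : ℕ):ℝ) with hF
      have hkpos : (0:ℝ) < k := by
        have : (1:ℝ) ≤ (k:ℝ) := by exact_mod_cast hk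
        linarith
      have hmul : α * ((k:ℝ) * F) ≤
          α * ((k:ℝ)*(N:ℝ) + ((h:ℝ)-1)*((k:ℝ)+1) - ((h:ℝ)-1)*(N:ℝ)) :=
        mul_le_mul_of_nonneg_left (by linarith) hpos.le
      have hlin : (k:ℝ) * (α * F) < (k:ℝ) * (N:ℝ) := by nlinarith [hmul, hA2]
      exact (mul_lt_mul_iff_right₀ hkpos).mp hlin
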